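/- Let κ > 0, set α(t) = ∫₀^{κ√t} e^{-r²/2} dr and D(t) = (1/(2t²))·∫₀^∞ e^{-r²/(2t)} r³ sinh(κr) log(sinh(κr)/(κr)) dr for t > 0. Then for every t > 0: D(t) > (1/2)κ²t(κ²t + 5) + (1/2)κ t^{1/2}(κ⁴t² + 6κ²t + 3) e^{κ²t/2} α(t) - (1/2)√(π/2)·κ t^{1/2}(κ²t + 3) e^{κ²t/2} · log(1 + 2κ√(2/π)·t^{1/2}(κ²t + 5)/(κ²t + 3)·e^{-κ²t/2} + 2√(2/π)·(κ⁴t² + 6κ²t + 3)/(κ²t + 3)·α(t)). -/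

import Mathlib

open Real MeasureTheory

open Set Filter

/-- `α(t) = ∫₀^{κ√t} e^{-r²/2} dr`. -/
noncomputable def alphaFun (κ t : ℝ) : ℝ :=
  ∫ r in (0 : ℝ)..(κ * Real.sqrt t), Real.exp (-r ^ 2 / 2)

/-- `D(t) = (1/(2t²)) ∫₀^∞ e^{-r²/(2t)} r³ sinh(κr) log(sinh(κr)/(κr)) dr`
(the derivative of `η`). -/
noncomputable def etaDeriv (κ t : ℝ) : ℝ :=
  (1 / (2 * t ^ 2)) * ∫ r in Set.Ioi (0 : ℝ),
    Real.exp (-r ^ 2 / (2 * t)) * r ^ 3 * Real.sinh (κ * r) *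
      Real.log (Real.sinh (κ * r) / (κ * r))

namespace EtaAux

lemma exp_quad_bound (t : ℝ) (ht : 0 < t) (β r : ℝ) :
    Real.exp (-r ^ 2 / (2 * t) + β * r)
      ≤ Real.exp (β ^ 2 * t) * Real.exp (-(1 / (4 * t)) * r ^ 2) := by
  rw [← Real.exp_add]
  apply Real.exp_le_exp.2
  have h5 : β * r - β ^ 2 * t ≤ r ^ 2 / (4 * t) := by
    rw [le_div_iff₀ (by positivity : (0:ℝ) < 4 * t)]
    nlinarith [sq_nonneg (r - 2 * β * t)]
  have e : -r ^ 2 / (2 * t) + r ^ 2 / (4 * t) = -(1 / (4 * t)) * r ^ 2 := by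
    field_simp; ring
  linarith

lemma gauss_poly_integrable (t : ℝ) (ht : 0 < t) (n : ℕ) (β : ℝ) :
    Integrable (fun r : ℝ => r ^ n * Real.exp (-r ^ 2 / (2 * t) + β * r)) := by
  have h4t : (0:ℝ) < 1 / (4 * t) := by positivity
  have base : Integrable (fun x : ℝ => x ^ n * Real.exp (-(1 / (4 * t)) * x ^ 2)) := by
    have := integrable_rpow_mul_exp_neg_mul_sq h4t (s := n)
      (lt_of_lt_of_le (by norm_num) (Nat.cast_nonneg n))
    simpa [Real.rpow_natCast] using this
  refine (base.abs.const_mul (Real.exp (β ^ 2 * t))).mono' ?_ ?_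
  · exact (Continuous.mul (continuous_pow n) (by continuity)).aestronglyMeasurable
  · filter_upwards with r
    have hexp := exp_quad_bound t ht β r
    rw [Real.norm_eq_abs, abs_mul, abs_of_nonneg (Real.exp_pos _).le, abs_mul,
      abs_of_nonneg (Real.exp_pos _).le]
    calc |r ^ n| * Real.exp (-r ^ 2 / (2 * t) + β * r)
        ≤ |r ^ n| * (Real.exp (β ^ 2 * t) * Real.exp (-(1 / (4 * t)) * r ^ 2)) :=
          mul_le_mul_of_nonneg_left hexp (abs_nonneg _)
      _ = Real.exp (β ^ 2 * t) * (|r ^ n| * Real.exp (-(1 / (4 * t)) * r ^ 2)) := by ring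

lemma gauss_poly_tendsto (t : ℝ) (ht : 0 < t) (n : ℕ) (β : ℝ) :
    Tendsto (fun r : ℝ => r ^ n * Real.exp (-r ^ 2 / (2 * t) + β * r)) atTop (nhds 0) := by
  have h := tendsto_pow_mul_exp_neg_atTop_nhds_zero n
  apply squeeze_zero' ?_ ?_ h
  · filter_upwards [eventually_ge_atTop (0:ℝ)] with r hr
    positivity
  · filter_upwards [eventually_ge_atTop (max 1 (2 * t * (β + 1)))] with r hr
    have hr1 : (1:ℝ) ≤ r := le_trans (le_max_left _ _) hr
    have hr2 : 2 * t * (β + 1) ≤ r := le_trans (le_max_right _ _) hr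
    have hr0 : 0 < r := by linarith
    apply mul_le_mul_of_nonneg_left _ (by positivity : (0:ℝ) ≤ r ^ n)
    apply Real.exp_le_exp.2
    have h5 : (β + 1) * r ≤ r ^ 2 / (2 * t) := by
      rw [le_div_iff₀ (by positivity : (0:ℝ) < 2 * t)]
      nlinarith
    have e : -r ^ 2 / (2 * t) = -(r ^ 2 / (2 * t)) := by ring
    linarith [h5]

lemma gauss_integral_Iic_zero (t : ℝ) (ht : 0 < t) :
    ∫ y in Iic (0:ℝ), Real.exp (-(1 / (2 * t)) * y ^ 2) = Real.sqrt (π * t / 2) := by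
  have h := integral_gaussian_Ioi (1 / (2 * t))
  have h0 := integral_comp_neg_Iic (0:ℝ) (fun y : ℝ => Real.exp (-(1 / (2 * t)) * y ^ 2))
  simp only [neg_sq, neg_zero] at h0
  rw [h0, h]
  rw [show π / (1 / (2 * t)) = 4 * (π * t / 2) by field_simp; ring]
  rw [Real.sqrt_mul (by norm_num) (π * t / 2),
    show Real.sqrt 4 = 2 by rw [show (4:ℝ) = 2 ^ 2 by norm_num, Real.sqrt_sq (by norm_num)]]
  ring

lemma E_val (t : ℝ) (ht : 0 < t) (β : ℝ) :
    ∫ r in Ioi (0:ℝ), Real.exp (-r ^ 2 / (2 * t) + β * r)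
      = Real.exp (β ^ 2 * t / 2) * (Real.sqrt (π * t / 2)
        + Real.sqrt t * ∫ u in (0:ℝ)..(β * Real.sqrt t), Real.exp (-u ^ 2 / 2)) := by
  have ht' : t ≠ 0 := ne_of_gt ht
  have hint : Integrable (fun y : ℝ => Real.exp (-(1 / (2 * t)) * y ^ 2)) :=
    integrable_exp_neg_mul_sq (by positivity)
  have h1 : ∀ r : ℝ, Real.exp (-r ^ 2 / (2 * t) + β * r)
      = Real.exp (β ^ 2 * t / 2) * Real.exp (-(1 / (2 * t)) * (r + -(β * t)) ^ 2) := by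
    intro r
    rw [← Real.exp_add]
    congr 1
    field_simp
    ring
  simp_rw [h1]
  rw [integral_const_mul]
  congr 1
  have hshift : ∫ r in Ioi (0:ℝ), Real.exp (-(1 / (2 * t)) * (r + -(β * t)) ^ 2)
      = ∫ y in Ioi (-(β * t)), Real.exp (-(1 / (2 * t)) * y ^ 2) := by
    have hmp := measurePreserving_add_right (volume : Measure ℝ) (-(β * t))
    have hemb : MeasurableEmbedding (fun x : ℝ => x + -(β * t)) :=
      (Homeomorph.addRight (-(β * t))).isClosedEmbedding.measurableEmbedding
    have := hmp.setIntegral_preimage_emb hemb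
      (fun y => Real.exp (-(1 / (2 * t)) * y ^ 2)) (Ioi (-(β * t)))
    rw [show (fun x : ℝ => x + -(β * t)) ⁻¹' Ioi (-(β * t)) = Ioi (0:ℝ) by
      ext x; simp] at this
    exact this
  rw [hshift]
  have heven : ∫ y in Ioi (-(β * t)), Real.exp (-(1 / (2 * t)) * y ^ 2)
      = ∫ y in Iic (β * t), Real.exp (-(1 / (2 * t)) * y ^ 2) := by
    have h0 := integral_comp_neg_Iic (β * t) (fun y : ℝ => Real.exp (-(1 / (2 * t)) * y ^ 2))
    simp only [neg_sq] at h0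
    exact h0.symm
  rw [heven]
  have hsplit : (∫ y in Iic (β * t), Real.exp (-(1 / (2 * t)) * y ^ 2))
      - ∫ y in Iic (0:ℝ), Real.exp (-(1 / (2 * t)) * y ^ 2)
      = ∫ y in (0:ℝ)..(β * t), Real.exp (-(1 / (2 * t)) * y ^ 2) :=
    intervalIntegral.integral_Iic_sub_Iic hint.integrableOn hint.integrableOn
  have hsubst : Real.sqrt t * ∫ u in (0:ℝ)..(β * Real.sqrt t), Real.exp (-u ^ 2 / 2)
      = ∫ y in (0:ℝ)..(β * t), Real.exp (-(1 / (2 * t)) * y ^ 2) := by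
    have hst : Real.sqrt t * Real.sqrt t = t := Real.mul_self_sqrt ht.le
    have key := intervalIntegral.mul_integral_comp_mul_right (a := (0:ℝ)) (b := β * Real.sqrt t)
      (c := Real.sqrt t) (f := fun y => Real.exp (-(1 / (2 * t)) * y ^ 2))
    rw [zero_mul, mul_assoc, hst] at key
    rw [show (∫ u in (0:ℝ)..(β * Real.sqrt t), Real.exp (-u ^ 2 / 2))
        = ∫ u in (0:ℝ)..(β * Real.sqrt t),
            Real.exp (-(1 / (2 * t)) * (u * Real.sqrt t) ^ 2) from
      intervalIntegral.integral_congr (fun u _ => by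
        congr 1
        rw [mul_pow, show Real.sqrt t ^ 2 = t by rw [sq]; exact hst]
        field_simp)]
    exact key
  rw [gauss_integral_Iic_zero t ht] at hsplit
  rw [hsubst]
  linarith [hsplit]

lemma exp_gauss_hasDeriv (t : ℝ) (ht : 0 < t) (β x : ℝ) :
    HasDerivAt (fun r : ℝ => Real.exp (-r ^ 2 / (2 * t) + β * r))
      ((-x / t + β) * Real.exp (-x ^ 2 / (2 * t) + β * x)) x := by
  have h1 : HasDerivAt (fun r : ℝ => -r ^ 2 / (2 * t) + β * r) (-x / t + β) x := by
    have hp : HasDerivAt (fun r : ℝ => r ^ 2) (2 * x) x := by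
      simpa using hasDerivAt_pow 2 x
    have := ((hp.neg).div_const (2 * t)).add ((hasDerivAt_id x).const_mul β)
    refine this.congr_deriv ?_
    have ht' : t ≠ 0 := ne_of_gt ht
    ring
  simpa [mul_comm] using h1.exp

lemma gauss_integrable' (t : ℝ) (ht : 0 < t) (β : ℝ) :
    Integrable (fun r : ℝ => Real.exp (-r ^ 2 / (2 * t) + β * r)) := by
  simpa using gauss_poly_integrable t ht 0 β

lemma K3_val (t : ℝ) (ht : 0 < t) (β : ℝ) :
    ∫ r in Ioi (0:ℝ), r ^ 3 * Real.exp (-r ^ 2 / (2 * t) + β * r)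
      = (2 * t ^ 2 + β ^ 2 * t ^ 3) + (3 * β * t ^ 2 + β ^ 3 * t ^ 3)
          * ∫ r in Ioi (0:ℝ), Real.exp (-r ^ 2 / (2 * t) + β * r) := by
  have ht' : t ≠ 0 := ne_of_gt ht
  set μv : ℝ := -(3 * β * t ^ 2 + β ^ 3 * t ^ 3) with hμv
  set F : ℝ → ℝ := fun r =>
    (-t * r ^ 2 - β * t ^ 2 * r - (2 * t ^ 2 + β ^ 2 * t ^ 3))
      * Real.exp (-r ^ 2 / (2 * t) + β * r) with hF
  have hderiv : ∀ x ∈ Ici (0:ℝ), HasDerivAt F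
      ((fun x => (x ^ 3 + μv) * Real.exp (-x ^ 2 / (2 * t) + β * x)) x) x := by
    intro x _
    have hpoly : HasDerivAt
        (fun r : ℝ => -t * r ^ 2 - β * t ^ 2 * r - (2 * t ^ 2 + β ^ 2 * t ^ 3))
        (-t * (2 * x) - β * t ^ 2) x := by
      have h2 : HasDerivAt (fun r : ℝ => r ^ 2) (2 * x) x := by
        simpa using hasDerivAt_pow 2 x
      simpa using (((h2.const_mul (-t)).sub ((hasDerivAt_id x).const_mul (β * t ^ 2))).sub_const
        (2 * t ^ 2 + β ^ 2 * t ^ 3))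
    have := hpoly.mul (exp_gauss_hasDeriv t ht β x)
    refine this.congr_deriv ?_
    rw [hμv]
    field_simp
    ring
  have hint : IntegrableOn (fun x : ℝ => (x ^ 3 + μv) * Real.exp (-x ^ 2 / (2 * t) + β * x))
      (Ioi 0) := by
    have : (fun x : ℝ => (x ^ 3 + μv) * Real.exp (-x ^ 2 / (2 * t) + β * x))
        = fun x : ℝ => x ^ 3 * Real.exp (-x ^ 2 / (2 * t) + β * x)
          + μv * Real.exp (-x ^ 2 / (2 * t) + β * x) := by
      funext x; ring
    rw [this]
    exact ((gauss_poly_integrable t ht 3 β).add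
      ((gauss_integrable' t ht β).const_mul μv)).integrableOn
  have htend : Tendsto F atTop (nhds 0) := by
    have h2 := (gauss_poly_tendsto t ht 2 β).const_mul (-t)
    have h1 := (gauss_poly_tendsto t ht 1 β).const_mul (β * t ^ 2)
    have h0 := (gauss_poly_tendsto t ht 0 β).const_mul (2 * t ^ 2 + β ^ 2 * t ^ 3)
    have := (h2.sub h1).sub h0
    simp only [mul_zero, sub_zero] at this
    refine this.congr (fun r => ?_)
    simp only [hF, pow_one, pow_zero]
    ring
  have heval := integral_Ioi_of_hasDerivAt_of_tendsto' hderiv hint htend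
  have hF0 : F 0 = -(2 * t ^ 2 + β ^ 2 * t ^ 3) := by
    simp [hF]
  rw [hF0, zero_sub, neg_neg] at heval
  have hadd : ∫ x in Ioi (0:ℝ), (x ^ 3 + μv) * Real.exp (-x ^ 2 / (2 * t) + β * x)
      = (∫ x in Ioi (0:ℝ), x ^ 3 * Real.exp (-x ^ 2 / (2 * t) + β * x))
        + μv * ∫ x in Ioi (0:ℝ), Real.exp (-x ^ 2 / (2 * t) + β * x) := by
    rw [show (fun x : ℝ => (x ^ 3 + μv) * Real.exp (-x ^ 2 / (2 * t) + β * x))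
        = fun x : ℝ => x ^ 3 * Real.exp (-x ^ 2 / (2 * t) + β * x)
          + μv * Real.exp (-x ^ 2 / (2 * t) + β * x) from funext fun x => by ring]
    rw [integral_add ((gauss_poly_integrable t ht 3 β).integrableOn)
      (((gauss_integrable' t ht β).const_mul μv).integrableOn)]
    rw [integral_const_mul]
  rw [hadd] at heval
  rw [hμv] at heval
  linarith

lemma K4_val (t : ℝ) (ht : 0 < t) (β : ℝ) :
    ∫ r in Ioi (0:ℝ), r ^ 4 * Real.exp (-r ^ 2 / (2 * t) + β * r)
      = (5 * β * t ^ 3 + β ^ 3 * t ^ 4) + (3 * t ^ 2 + 6 * β ^ 2 * t ^ 3 + β ^ 4 * t ^ 4)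
          * ∫ r in Ioi (0:ℝ), Real.exp (-r ^ 2 / (2 * t) + β * r) := by
  have ht' : t ≠ 0 := ne_of_gt ht
  set μv : ℝ := -(3 * t ^ 2 + 6 * β ^ 2 * t ^ 3 + β ^ 4 * t ^ 4) with hμv
  set F : ℝ → ℝ := fun r =>
    (-t * r ^ 3 - β * t ^ 2 * r ^ 2 - (3 * t ^ 2 + β ^ 2 * t ^ 3) * r
        - (5 * β * t ^ 3 + β ^ 3 * t ^ 4))
      * Real.exp (-r ^ 2 / (2 * t) + β * r) with hF
  have hderiv : ∀ x ∈ Ici (0:ℝ), HasDerivAt F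
      ((fun x => (x ^ 4 + μv) * Real.exp (-x ^ 2 / (2 * t) + β * x)) x) x := by
    intro x _
    have hpoly : HasDerivAt
        (fun r : ℝ => -t * r ^ 3 - β * t ^ 2 * r ^ 2 - (3 * t ^ 2 + β ^ 2 * t ^ 3) * r
          - (5 * β * t ^ 3 + β ^ 3 * t ^ 4))
        (-t * (3 * x ^ 2) - β * t ^ 2 * (2 * x) - (3 * t ^ 2 + β ^ 2 * t ^ 3)) x := by
      have h3 : HasDerivAt (fun r : ℝ => r ^ 3) (3 * x ^ 2) x := by
        simpa using hasDerivAt_pow 3 x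
      have h2 : HasDerivAt (fun r : ℝ => r ^ 2) (2 * x) x := by
        simpa using hasDerivAt_pow 2 x
      simpa using (((h3.const_mul (-t)).sub (h2.const_mul (β * t ^ 2))).sub
        ((hasDerivAt_id x).const_mul (3 * t ^ 2 + β ^ 2 * t ^ 3))).sub_const
        (5 * β * t ^ 3 + β ^ 3 * t ^ 4)
    have := hpoly.mul (exp_gauss_hasDeriv t ht β x)
    refine this.congr_deriv ?_
    rw [hμv]
    field_simp
    ring
  have hint : IntegrableOn (fun x : ℝ => (x ^ 4 + μv) * Real.exp (-x ^ 2 / (2 * t) + β * x))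
      (Ioi 0) := by
    have : (fun x : ℝ => (x ^ 4 + μv) * Real.exp (-x ^ 2 / (2 * t) + β * x))
        = fun x : ℝ => x ^ 4 * Real.exp (-x ^ 2 / (2 * t) + β * x)
          + μv * Real.exp (-x ^ 2 / (2 * t) + β * x) := by
      funext x; ring
    rw [this]
    exact ((gauss_poly_integrable t ht 4 β).add
      ((gauss_integrable' t ht β).const_mul μv)).integrableOn
  have htend : Tendsto F atTop (nhds 0) := by
    have h3 := (gauss_poly_tendsto t ht 3 β).const_mul (-t)
    have h2 := (gauss_poly_tendsto t ht 2 β).const_mul (β * t ^ 2)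
    have h1 := (gauss_poly_tendsto t ht 1 β).const_mul (3 * t ^ 2 + β ^ 2 * t ^ 3)
    have h0 := (gauss_poly_tendsto t ht 0 β).const_mul (5 * β * t ^ 3 + β ^ 3 * t ^ 4)
    have := ((h3.sub h2).sub h1).sub h0
    simp only [mul_zero, sub_zero] at this
    refine this.congr (fun r => ?_)
    simp only [hF, pow_one, pow_zero]
    ring
  have heval := integral_Ioi_of_hasDerivAt_of_tendsto' hderiv hint htend
  have hF0 : F 0 = -(5 * β * t ^ 3 + β ^ 3 * t ^ 4) := by
    simp [hF]
  rw [hF0, zero_sub, neg_neg] at heval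
  have hadd : ∫ x in Ioi (0:ℝ), (x ^ 4 + μv) * Real.exp (-x ^ 2 / (2 * t) + β * x)
      = (∫ x in Ioi (0:ℝ), x ^ 4 * Real.exp (-x ^ 2 / (2 * t) + β * x))
        + μv * ∫ x in Ioi (0:ℝ), Real.exp (-x ^ 2 / (2 * t) + β * x) := by
    rw [show (fun x : ℝ => (x ^ 4 + μv) * Real.exp (-x ^ 2 / (2 * t) + β * x))
        = fun x : ℝ => x ^ 4 * Real.exp (-x ^ 2 / (2 * t) + β * x)
          + μv * Real.exp (-x ^ 2 / (2 * t) + β * x) from funext fun x => by ring]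
    rw [integral_add ((gauss_poly_integrable t ht 4 β).integrableOn)
      (((gauss_integrable' t ht β).const_mul μv).integrableOn)]
    rw [integral_const_mul]
  rw [hadd] at heval
  rw [hμv] at heval
  linarith

lemma sinh_split (t κ : ℝ) (n : ℕ) (r : ℝ) :
    Real.exp (-r ^ 2 / (2 * t)) * r ^ n * Real.sinh (κ * r)
      = (1/2) * (r ^ n * Real.exp (-r ^ 2 / (2 * t) + κ * r))
        - (1/2) * (r ^ n * Real.exp (-r ^ 2 / (2 * t) + -κ * r)) := by
  simp only [Real.sinh_eq, Real.exp_add, neg_mul]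
  ring

lemma sinh_integrable (t : ℝ) (ht : 0 < t) (κ : ℝ) (n : ℕ) :
    Integrable (fun r : ℝ => Real.exp (-r ^ 2 / (2 * t)) * r ^ n * Real.sinh (κ * r)) := by
  rw [show (fun r : ℝ => Real.exp (-r ^ 2 / (2 * t)) * r ^ n * Real.sinh (κ * r))
    = fun r => (1/2) * (r ^ n * Real.exp (-r ^ 2 / (2 * t) + κ * r))
      - (1/2) * (r ^ n * Real.exp (-r ^ 2 / (2 * t) + -κ * r))
    from funext fun r => sinh_split t κ n r]
  exact ((gauss_poly_integrable t ht n κ).const_mul (1/2)).sub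
    ((gauss_poly_integrable t ht n (-κ)).const_mul (1/2))

lemma alpha_neg (c : ℝ) : (∫ u in (0:ℝ)..(-c), Real.exp (-u ^ 2 / 2))
    = -∫ u in (0:ℝ)..c, Real.exp (-u ^ 2 / 2) := by
  have h := intervalIntegral.integral_comp_neg (a := (0:ℝ)) (b := c)
    (fun u : ℝ => Real.exp (-u ^ 2 / 2))
  simp only [neg_sq, neg_zero] at h
  rw [h, intervalIntegral.integral_symm]

lemma Z_val (κ t : ℝ) (ht : 0 < t) :
    ∫ r in Ioi (0:ℝ), Real.exp (-r ^ 2 / (2 * t)) * r ^ 3 * Real.sinh (κ * r)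
      = (3 * κ * t ^ 2 + κ ^ 3 * t ^ 3) * Real.exp (κ ^ 2 * t / 2) * Real.sqrt (π * t / 2) := by
  rw [show (fun r : ℝ => Real.exp (-r ^ 2 / (2 * t)) * r ^ 3 * Real.sinh (κ * r))
    = fun r => (1/2) * (r ^ 3 * Real.exp (-r ^ 2 / (2 * t) + κ * r))
      - (1/2) * (r ^ 3 * Real.exp (-r ^ 2 / (2 * t) + -κ * r))
    from funext fun r => sinh_split t κ 3 r]
  rw [integral_sub ((gauss_poly_integrable t ht 3 κ).const_mul (1/2)).integrableOn
    ((gauss_poly_integrable t ht 3 (-κ)).const_mul (1/2)).integrableOn,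
    integral_const_mul, integral_const_mul, K3_val t ht κ, K3_val t ht (-κ),
    E_val t ht κ, E_val t ht (-κ)]
  simp only [neg_sq, neg_mul, alpha_neg]
  ring

lemma J_val (κ t : ℝ) (ht : 0 < t) :
    ∫ r in Ioi (0:ℝ), Real.exp (-r ^ 2 / (2 * t)) * r ^ 4 * Real.sinh (κ * r)
      = (5 * κ * t ^ 3 + κ ^ 3 * t ^ 4)
        + (3 * t ^ 2 + 6 * κ ^ 2 * t ^ 3 + κ ^ 4 * t ^ 4) * Real.exp (κ ^ 2 * t / 2)
          * Real.sqrt t * ∫ u in (0:ℝ)..(κ * Real.sqrt t), Real.exp (-u ^ 2 / 2) := by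
  rw [show (fun r : ℝ => Real.exp (-r ^ 2 / (2 * t)) * r ^ 4 * Real.sinh (κ * r))
    = fun r => (1/2) * (r ^ 4 * Real.exp (-r ^ 2 / (2 * t) + κ * r))
      - (1/2) * (r ^ 4 * Real.exp (-r ^ 2 / (2 * t) + -κ * r))
    from funext fun r => sinh_split t κ 4 r]
  rw [integral_sub ((gauss_poly_integrable t ht 4 κ).const_mul (1/2)).integrableOn
    ((gauss_poly_integrable t ht 4 (-κ)).const_mul (1/2)).integrableOn,
    integral_const_mul, integral_const_mul, K4_val t ht κ, K4_val t ht (-κ),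
    E_val t ht κ, E_val t ht (-κ)]
  simp only [neg_sq, neg_mul, alpha_neg]
  ring

lemma sinh_le_exp (y : ℝ) : Real.sinh y ≤ Real.exp y := by
  rw [Real.sinh_eq]
  nlinarith [Real.exp_pos y, Real.exp_pos (-y)]

lemma sinh_le_mul_exp (y : ℝ) : Real.sinh y ≤ y * Real.exp y := by
  rw [Real.sinh_eq]
  have h1 : 1 - Real.exp (-(2*y)) ≤ 2*y := by
    have := Real.add_one_le_exp (-(2*y)); linarith
  have h2 : Real.exp y * (1 - Real.exp (-(2*y))) = Real.exp y - Real.exp (-y) := by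
    rw [mul_sub, mul_one, ← Real.exp_add]; ring_nf
  nlinarith [Real.exp_pos y, mul_le_mul_of_nonneg_left h1 (Real.exp_pos y).le]

lemma log_sinh_nonneg (x : ℝ) (hx : 0 < x) : 0 ≤ Real.log (Real.sinh x / x) := by
  apply Real.log_nonneg
  rw [le_div_iff₀ hx, one_mul]
  exact (Real.self_lt_sinh_iff.mpr hx).le

lemma log_sinh_le (x : ℝ) (hx : 0 < x) : Real.log (Real.sinh x / x) ≤ x := by
  have hs : 0 < Real.sinh x := Real.sinh_pos_iff.mpr hx
  rw [Real.log_le_iff_le_exp (by positivity), div_le_iff₀ hx]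
  calc Real.sinh x ≤ x * Real.exp x := sinh_le_mul_exp x
    _ = Real.exp x * x := mul_comm _ _

lemma core_ineq (x c : ℝ) (hx : 0 < x) (hc : 0 < c) :
    x - Real.log (1 + c) - (2 * x - c) / (1 + c) < Real.log (Real.sinh x / x) := by
  have h2x : (0:ℝ) < 1 + 2 * x := by linarith
  have h1c : (0:ℝ) < 1 + c := by linarith
  have step1 : Real.log (1 + 2 * x) ≤ Real.log (1 + c) + (2 * x - c) / (1 + c) := by
    have h := Real.log_le_sub_one_of_pos (show 0 < (1 + 2 * x) / (1 + c) by positivity)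
    rw [Real.log_div (by linarith) (by linarith)] at h
    have heq : (1 + 2 * x) / (1 + c) - 1 = (2 * x - c) / (1 + c) := by
      field_simp
      ring
    linarith [heq ▸ h]
  have hs : 0 < Real.sinh x := Real.sinh_pos_iff.mpr hx
  have step2 : x - Real.log (1 + 2 * x) < Real.log (Real.sinh x / x) := by
    have h1' : 2 * x + 1 < Real.exp (2 * x) :=
      Real.add_one_lt_exp (by positivity)
    have hex : (0:ℝ) < Real.exp (-x) := Real.exp_pos _
    have h2 : (1 + 2 * x) * Real.exp (-x) < Real.exp x := by
      have hm := mul_lt_mul_of_pos_right h1' hex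
      rwa [show Real.exp (2 * x) * Real.exp (-x) = Real.exp x by
        rw [← Real.exp_add]; ring_nf, show (2 * x + 1) * Real.exp (-x)
          = (1 + 2 * x) * Real.exp (-x) by ring] at hm
    have key : Real.exp x * x < Real.sinh x * (1 + 2 * x) := by
      rw [Real.sinh_eq]
      nlinarith [h2]
    have hlt : Real.exp x / (1 + 2 * x) < Real.sinh x / x :=
      (div_lt_div_iff₀ h2x hx).mpr key
    have := Real.log_lt_log (by positivity) hlt
    rwa [Real.log_div (ne_of_gt (Real.exp_pos x)) (ne_of_gt h2x), Real.log_exp] at this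
  linarith

end EtaAux

open EtaAux

/-- Lower bound on `D(t) = η'(t)` for `κ > 0` and `t > 0`. -/
theorem eta_deriv_lower_bound (κ : ℝ) (hκ : 0 < κ) (t : ℝ) (ht : 0 < t) :
    etaDeriv κ t >
      (1 / 2) * κ ^ 2 * t * (κ ^ 2 * t + 5) +
        (1 / 2) * κ * t ^ ((1 : ℝ) / 2) * (κ ^ 4 * t ^ 2 + 6 * κ ^ 2 * t + 3) *
          Real.exp (κ ^ 2 * t / 2) * alphaFun κ t -
        (1 / 2) * Real.sqrt (π / 2) * κ * t ^ ((1 : ℝ) / 2) * (κ ^ 2 * t + 3) *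
          Real.exp (κ ^ 2 * t / 2) *
          Real.log (1 +
            2 * κ * Real.sqrt (2 / π) * t ^ ((1 : ℝ) / 2) * (κ ^ 2 * t + 5) /
              (κ ^ 2 * t + 3) * Real.exp (-κ ^ 2 * t / 2) +
            2 * Real.sqrt (2 / π) * (κ ^ 4 * t ^ 2 + 6 * κ ^ 2 * t + 3) /
              (κ ^ 2 * t + 3) * alphaFun κ t) := by
  have ht' : t ≠ 0 := ne_of_gt ht
  set S : ℝ := Real.sqrt t with hS_def
  have hS : 0 < S := Real.sqrt_pos.mpr ht
  have hS2 : S ^ 2 = t := Real.sq_sqrt ht.le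
  set A : ℝ := Real.exp (κ ^ 2 * t / 2) with hA_def
  have hA : 0 < A := Real.exp_pos _
  set α : ℝ := alphaFun κ t with hα_def
  have hαint : α = ∫ u in (0:ℝ)..(κ * S), Real.exp (-u ^ 2 / 2) := by
    rw [hα_def, hS_def]; rfl
  have hα : 0 ≤ α := by
    rw [hαint]
    exact intervalIntegral.integral_nonneg (by positivity)
      (fun u _ => (Real.exp_pos _).le)
  set Q : ℝ := Real.sqrt (π / 2) with hQ_def
  have hQ : 0 < Q := Real.sqrt_pos.mpr (by positivity)
  have hQt : Real.sqrt (π * t / 2) = Q * S := by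
    rw [hQ_def, hS_def, show π * t / 2 = π / 2 * t by ring,
      Real.sqrt_mul (by positivity : (0:ℝ) ≤ π / 2) t]
  have hW : Real.sqrt (2 / π) = Q⁻¹ := by
    rw [show (2:ℝ) / π = (π / 2)⁻¹ from (inv_div π 2).symm, Real.sqrt_inv, hQ_def]
  have hEA : Real.exp (-κ ^ 2 * t / 2) = A⁻¹ := by
    rw [show -κ ^ 2 * t / 2 = -(κ ^ 2 * t / 2) by ring, Real.exp_neg, hA_def]
  -- closed forms
  set Z : ℝ := (3 * κ * t ^ 2 + κ ^ 3 * t ^ 3) * A * (Q * S) with hZ_def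
  set J : ℝ := (5 * κ * t ^ 3 + κ ^ 3 * t ^ 4)
      + (3 * t ^ 2 + 6 * κ ^ 2 * t ^ 3 + κ ^ 4 * t ^ 4) * A * S * α with hJ_def
  have hZpos : 0 < Z := by rw [hZ_def]; positivity
  have hJpos : 0 < J := by
    rw [hJ_def]
    have h1 : (0:ℝ) < 5 * κ * t ^ 3 + κ ^ 3 * t ^ 4 := by positivity
    have h2 : 0 ≤ (3 * t ^ 2 + 6 * κ ^ 2 * t ^ 3 + κ ^ 4 * t ^ 4) * A * S * α :=
      mul_nonneg (by positivity) hα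
    linarith
  have hZint : (∫ r in Ioi (0:ℝ), Real.exp (-r ^ 2 / (2 * t)) * r ^ 3 * Real.sinh (κ * r))
      = Z := by
    rw [Z_val κ t ht, hQt, ← hA_def, hZ_def]
  have hJint : (∫ r in Ioi (0:ℝ), Real.exp (-r ^ 2 / (2 * t)) * r ^ 4 * Real.sinh (κ * r))
      = J := by
    rw [J_val κ t ht, ← hA_def, ← hS_def, hJ_def, hαint]
  set c : ℝ := 2 * κ * J / Z with hc_def
  have hc : 0 < c := by
    rw [hc_def]
    exact div_pos (by positivity) hZpos
  have h1c : (0:ℝ) < 1 + c := by linarith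
  have h1c' : (1:ℝ) + c ≠ 0 := ne_of_gt h1c
  have hcz : c * Z = 2 * κ * J := by
    rw [hc_def, div_mul_cancel₀ _ (ne_of_gt hZpos)]
  clear_value c Z J α A S Q
  set L : ℝ := Real.log (1 + c) with hL_def
  clear_value L
  -- the two functions
  set f : ℝ → ℝ := fun r => Real.exp (-r ^ 2 / (2 * t)) * r ^ 3 * Real.sinh (κ * r)
      * Real.log (Real.sinh (κ * r) / (κ * r)) with hf_def
  set g : ℝ → ℝ := fun r =>
      (κ * (c - 1) / (c + 1)) * (Real.exp (-r ^ 2 / (2 * t)) * r ^ 4 * Real.sinh (κ * r))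
      + (c / (1 + c) - L) * (Real.exp (-r ^ 2 / (2 * t)) * r ^ 3 * Real.sinh (κ * r))
      with hg_def
  have hgint : IntegrableOn g (Ioi 0) := by
    rw [hg_def]
    exact (((sinh_integrable t ht κ 4).const_mul _).add
      ((sinh_integrable t ht κ 3).const_mul _)).integrableOn
  have hgval : ∫ r in Ioi (0:ℝ), g r = κ * (c - 1) / (c + 1) * J + (c / (1 + c) - L) * Z := by
    rw [hg_def]
    rw [integral_add (((sinh_integrable t ht κ 4).const_mul _).integrableOn)
      (((sinh_integrable t ht κ 3).const_mul _).integrableOn),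
      integral_const_mul, integral_const_mul, hZint, hJint]
  -- integrability of f
  have hfmeas : AEStronglyMeasurable f (volume.restrict (Ioi 0)) := by
    apply ContinuousOn.aestronglyMeasurable _ measurableSet_Ioi
    apply continuousOn_of_forall_continuousAt
    intro r hr
    have hx : 0 < κ * r := mul_pos hκ hr
    have h1 : ContinuousAt
        (fun r : ℝ => Real.exp (-r ^ 2 / (2 * t)) * r ^ 3 * Real.sinh (κ * r)) r := by
      fun_prop
    have hdiv : ContinuousAt (fun r : ℝ => Real.sinh (κ * r) / (κ * r)) r :=
      ContinuousAt.div (by fun_prop) (by fun_prop) (ne_of_gt hx)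
    have h2 : ContinuousAt (fun r : ℝ => Real.log (Real.sinh (κ * r) / (κ * r))) r := by
      have := ContinuousAt.comp (g := Real.log)
        (f := fun r : ℝ => Real.sinh (κ * r) / (κ * r))
        (Real.continuousAt_log (ne_of_gt (div_pos (Real.sinh_pos_iff.mpr hx) hx))) hdiv
      exact this
    rw [hf_def]
    exact h1.mul h2
  have hfint : IntegrableOn f (Ioi 0) := by
    apply Integrable.mono' (((gauss_poly_integrable t ht 4 κ).const_mul κ).integrableOn) hfmeas
    rw [ae_restrict_iff' measurableSet_Ioi]
    apply ae_of_all
    intro r hr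
    have hr0 : 0 < r := hr
    have hx : 0 < κ * r := mul_pos hκ hr0
    have hsh : 0 < Real.sinh (κ * r) := Real.sinh_pos_iff.mpr hx
    have hE : 0 < Real.exp (-r ^ 2 / (2 * t)) := Real.exp_pos _
    have hXnn : 0 ≤ Real.exp (-r ^ 2 / (2 * t)) * r ^ 3 * Real.sinh (κ * r) :=
      mul_nonneg (mul_nonneg hE.le (by positivity)) hsh.le
    have hnn : 0 ≤ f r := by
      rw [hf_def]
      exact mul_nonneg hXnn (log_sinh_nonneg _ hx)
    rw [Real.norm_eq_abs, abs_of_nonneg hnn]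
    have step1 : f r ≤ Real.exp (-r ^ 2 / (2 * t)) * r ^ 3 * Real.sinh (κ * r) * (κ * r) := by
      rw [hf_def]
      exact mul_le_mul_of_nonneg_left (log_sinh_le _ hx) hXnn
    have step2 : Real.exp (-r ^ 2 / (2 * t)) * r ^ 3 * Real.sinh (κ * r) * (κ * r)
        ≤ κ * (r ^ 4 * Real.exp (-r ^ 2 / (2 * t) + κ * r)) := by
      rw [Real.exp_add]
      have h3 : Real.exp (-r ^ 2 / (2 * t)) * r ^ 3 * Real.sinh (κ * r)
          ≤ Real.exp (-r ^ 2 / (2 * t)) * r ^ 3 * Real.exp (κ * r) :=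
        mul_le_mul_of_nonneg_left (sinh_le_exp (κ * r))
          (mul_nonneg hE.le (by positivity))
      calc Real.exp (-r ^ 2 / (2 * t)) * r ^ 3 * Real.sinh (κ * r) * (κ * r)
          ≤ Real.exp (-r ^ 2 / (2 * t)) * r ^ 3 * Real.exp (κ * r) * (κ * r) :=
            mul_le_mul_of_nonneg_right h3 hx.le
        _ = κ * (r ^ 4 * (Real.exp (-r ^ 2 / (2 * t)) * Real.exp (κ * r))) := by ring
    linarith
  -- pointwise strict inequality
  have hpt : ∀ r ∈ Ioi (0:ℝ), 0 < f r - g r := by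
    intro r hr
    have hr0 : 0 < r := hr
    have hx : 0 < κ * r := mul_pos hκ hr0
    have hsh : 0 < Real.sinh (κ * r) := Real.sinh_pos_iff.mpr hx
    have hfact : f r - g r = (Real.exp (-r ^ 2 / (2 * t)) * r ^ 3 * Real.sinh (κ * r))
        * (Real.log (Real.sinh (κ * r) / (κ * r))
            - (κ * r - L - (2 * (κ * r) - c) / (1 + c))) := by
      rw [hf_def, hg_def]
      field_simp
      ring
    rw [hfact]
    apply mul_pos (mul_pos (mul_pos (Real.exp_pos _) (pow_pos hr0 3)) hsh)
    have := core_ineq (κ * r) c hx hc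
    rw [← hL_def] at this
    linarith
  have hdiffint : IntegrableOn (fun r => f r - g r) (Ioi 0) := hfint.sub hgint
  have hposint : 0 < ∫ r in Ioi (0:ℝ), (f r - g r) := by
    rw [setIntegral_pos_iff_support_of_nonneg_ae
      ((ae_restrict_iff' measurableSet_Ioi).2 (ae_of_all _ fun r hr => (hpt r hr).le))
      hdiffint]
    refine lt_of_lt_of_le ?_ (measure_mono
      (fun r hr => (⟨ne_of_gt (hpt r hr), hr⟩ :
        r ∈ Function.support (fun r => f r - g r) ∩ Ioi 0)))
    simp [Real.volume_Ioi]
  have hlt : ∫ r in Ioi (0:ℝ), g r < ∫ r in Ioi (0:ℝ), f r := by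
    rw [integral_sub hfint hgint] at hposint
    linarith
  have hmul : (1 / (2 * t ^ 2)) * (∫ r in Ioi (0:ℝ), g r)
      < (1 / (2 * t ^ 2)) * ∫ r in Ioi (0:ℝ), f r :=
    mul_lt_mul_of_pos_left hlt (by positivity)
  -- algebra
  have halg : κ * (c - 1) / (c + 1) * J + (c / (1 + c) - L) * Z = κ * J - Z * L := by
    have hc1 : c + 1 ≠ 0 := by linarith
    field_simp
    linear_combination (c + 1) * hcz
  have hArg : (1:ℝ) + c
      = 1 + 2 * κ * Q⁻¹ * S * (κ ^ 2 * t + 5) / (κ ^ 2 * t + 3) * A⁻¹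
        + 2 * Q⁻¹ * (κ ^ 4 * t ^ 2 + 6 * κ ^ 2 * t + 3) / (κ ^ 2 * t + 3) * α := by
    have hk3 : (0:ℝ) < κ ^ 2 * t + 3 := by positivity
    rw [hc_def, hJ_def, hZ_def, ← hS2]
    have hk3' : κ ^ 2 * S ^ 2 + 3 ≠ 0 := by rw [hS2]; exact ne_of_gt hk3
    field_simp
    ring
  -- final assembly
  show _ < etaDeriv κ t
  have hDf : etaDeriv κ t = (1 / (2 * t ^ 2)) * ∫ r in Ioi (0:ℝ), f r := by
    simp only [etaDeriv, hf_def]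
  rw [hDf, ← Real.sqrt_eq_rpow, ← hS_def, hW, hEA, ← hArg, ← hL_def]
  refine lt_of_le_of_lt (le_of_eq ?_) hmul
  rw [hgval, halg, hJ_def, hZ_def]
  field_simp
  ring
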